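/- Let X be a set partitioned by a map ℛ : X → S into finitely many cells, S finite, F_S ⊆ S, and let F_X = ℛ⁻¹(F_S). Let t(·|x) be a probability measure on X for each x, and for each s define ν_x(s') = t(ℛ⁻¹(s') | x). Suppose 𝒫(s) ⊆ Δ(S) satisfies ν_x ∈ 𝒫(s) for all x ∈ ℛ⁻¹(s). If V : X → [0,1] and W : S → [0,1] satisfy W(ℛ(x)) ≤ V(x) for all x, then for all x ∈ X: min_{ν ∈ 𝒫(ℛ(x))} ∑_{s'} max{𝟙_{F_S}(s'), W(s')}ν(s') ≤ ∫_X max{𝟙_{F_X}(ξ), V(ξ)} t(dξ | x). -/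

import Mathlib

open MeasureTheory

theorem one_step_simulation_inequality
    {X : Type*} [MeasurableSpace X]
    {S : Type*} [Fintype S] [MeasurableSpace S] [MeasurableSingletonClass S]
    (R : X → S) (hR : Measurable R)
    (FS : Set S)
    (t : X → Measure X) (ht : ∀ x, IsProbabilityMeasure (t x))
    (P : S → Set (S → ℝ))
    (hPne : ∀ s, (P s).Nonempty) (hPcomp : ∀ s, IsCompact (P s))
    (hP : ∀ x : X, (fun s' : S => ((t x) (R ⁻¹' {s'})).toReal) ∈ P (R x))
    (V : X → ℝ) (hVmeas : Measurable V) (hV : ∀ x, V x ∈ Set.Icc (0:ℝ) 1)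
    (W : S → ℝ) (hW : ∀ s, W s ∈ Set.Icc (0:ℝ) 1)
    (hWV : ∀ x, W (R x) ≤ V x) :
    ∀ x : X,
      sInf ((fun ν : S → ℝ =>
          ∑ s', max (Set.indicator FS (fun _ => (1:ℝ)) s') (W s') * ν s') '' P (R x)) ≤
        ∫ ξ, max (Set.indicator (R ⁻¹' FS) (fun _ => (1:ℝ)) ξ) (V ξ) ∂(t x) := by
  intro x
  haveI := ht x
  set c : S → ℝ := fun s' => max (Set.indicator FS (fun _ => (1:ℝ)) s') (W s') with hc
  set f : (S → ℝ) → ℝ := fun ν => ∑ s', c s' * ν s' with hf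
  have hFSmeas : MeasurableSet FS := (Set.toFinite FS).measurableSet
  have hcmeas : Measurable c := Measurable.max
    (Measurable.indicator measurable_const hFSmeas) (measurable_of_finite W)
  -- f is continuous
  have hfcont : Continuous f := by
    apply continuous_finset_sum
    intro s _
    exact (continuous_const.mul (continuous_apply s))
  -- step 1: sInf ≤ f ν_x
  have hbdd : BddBelow (f '' P (R x)) :=
    ((hPcomp (R x)).image hfcont).bddBelow
  have h1 : sInf (f '' P (R x)) ≤ f (fun s' => ((t x) (R ⁻¹' {s'})).toReal) :=
    csInf_le hbdd (Set.mem_image_of_mem f (hP x))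
  refine h1.trans ?_
  -- step 2: f ν_x = ∫ c (R ξ) dμ
  have hmeasg : Measurable fun ξ => max (Set.indicator (R ⁻¹' FS) (fun _ => (1:ℝ)) ξ) (V ξ) :=
    Measurable.max (Measurable.indicator measurable_const (hR hFSmeas)) hVmeas
  have hintg : Integrable (fun ξ => max (Set.indicator (R ⁻¹' FS) (fun _ => (1:ℝ)) ξ) (V ξ)) (t x) := by
    refine Integrable.mono' (integrable_const 1) hmeasg.aestronglyMeasurable ?_
    filter_upwards with ξ
    rw [Real.norm_eq_abs, abs_le]
    constructor
    · have := (hV ξ).1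
      have : (0:ℝ) ≤ max (Set.indicator (R ⁻¹' FS) (fun _ => (1:ℝ)) ξ) (V ξ) :=
        le_max_of_le_right (hV ξ).1
      linarith
    · apply max_le _ (hV ξ).2
      by_cases h : ξ ∈ R ⁻¹' FS <;> simp [Set.indicator, h]
  have hintcR : Integrable (fun ξ => c (R ξ)) (t x) := by
    refine Integrable.mono' (integrable_const 1) ((hcmeas.comp hR)).aestronglyMeasurable ?_
    filter_upwards with ξ
    rw [Real.norm_eq_abs, abs_le]
    constructor
    · have : (0:ℝ) ≤ c (R ξ) := le_max_of_le_right (hW (R ξ)).1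
      linarith
    · apply max_le _ (hW (R ξ)).2
      by_cases h : R ξ ∈ FS <;> simp [Set.indicator, h]
  have hmap : ∫ ξ, c (R ξ) ∂(t x) = ∑ s', ((t x) (R ⁻¹' {s'})).toReal * c s' := by
    rw [← integral_map hR.aemeasurable hcmeas.aestronglyMeasurable]
    haveI : IsFiniteMeasure ((t x).map R) := Measure.isFiniteMeasure_map _ _
    rw [integral_fintype (f := c) (Integrable.of_finite)]
    congr 1
    ext s'
    rw [Measure.real, Measure.map_apply hR (measurableSet_singleton s')]
    simp [smul_eq_mul]
  have h2 : f (fun s' => ((t x) (R ⁻¹' {s'})).toReal) = ∫ ξ, c (R ξ) ∂(t x) := by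
    rw [hmap, hf]
    simp only [mul_comm]
  rw [h2]
  apply integral_mono hintcR hintg
  intro ξ
  have hind : Set.indicator FS (fun _ => (1:ℝ)) (R ξ)
      = Set.indicator (R ⁻¹' FS) (fun _ => (1:ℝ)) ξ := by
    by_cases h : R ξ ∈ FS <;> simp [Set.indicator, h]
  simp only [hc, hind]
  exact max_le_max le_rfl (hWV ξ)
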